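/- arXiv:1102.2723 — 2 statements merged into one kernel-verified Lean document; each statement's English description precedes it below -/
import Mathlib

section
/- For every complex number z, the series D(z) = z·∑_{n=0}^∞ P_n(0;p,q)·P_n(z;p,q) converges absolutely and D(z) = z·√q·((pq;q)_∞/(q;q)_∞)·∑_{n=0}^∞ (−1)^n·(q^{n(n+1)}/((pq;q)_n·(q;q)_n))·(z√q)^n. -/
/-- Finite q-shifted factorial `(z;q)_n`. -/
noncomputable def qp (z q : ℝ) (n : ℕ) : ℝ := ∏ k ∈ Finset.range n, (1 - z * q ^ k)

/-- Infinite q-shifted factorial `(z;q)_∞`. -/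
noncomputable def qpInf (z q : ℝ) : ℝ := ∏' k : ℕ, (1 - z * q ^ k)

/-- Gaussian q-binomial coefficient. -/
noncomputable def qbinom (q : ℝ) (n k : ℕ) : ℝ := qp q q n / (qp q q k * qp q q (n - k))

/-- Orthonormal generalized Stieltjes–Wigert polynomial `P_n(x;p,q)`. -/
noncomputable def P (p q : ℝ) (n : ℕ) (x : ℂ) : ℂ :=
  (-1) ^ n * ((q ^ ((n : ℝ) / 2 + 1 / 4) : ℝ) : ℂ) *
    ((Real.sqrt (qp p q n / qp q q n) : ℝ) : ℂ) *
    ∑ k ∈ Finset.range (n + 1),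
      (-1) ^ k * ((qbinom q n k : ℝ) : ℂ) * ((q ^ ((k : ℝ) ^ 2 + (k : ℝ) / 2) : ℝ) : ℂ) /
        ((qp p q k : ℝ) : ℂ) * x ^ k


open Filter Finset

section aux
variable {q a : ℝ}

lemma factor_pos (hq0 : 0 < q) (hq1 : q < 1) (ha0 : 0 ≤ a) (ha1 : a < 1) (k : ℕ) :
    0 < 1 - a * q ^ k := by
  have h1 : q ^ k ≤ 1 := pow_le_one₀ hq0.le hq1.le
  have h2 : a * q ^ k ≤ a * 1 := by
    apply mul_le_mul_of_nonneg_left h1 ha0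
  nlinarith

lemma factor_le_one (hq0 : 0 < q) (ha0 : 0 ≤ a) (k : ℕ) : 1 - a * q ^ k ≤ 1 := by
  have : 0 ≤ a * q ^ k := mul_nonneg ha0 (pow_nonneg hq0.le k)
  linarith

lemma qp_pos (hq0 : 0 < q) (hq1 : q < 1) (ha0 : 0 ≤ a) (ha1 : a < 1) (n : ℕ) :
    0 < qp a q n :=
  Finset.prod_pos fun k _ => factor_pos hq0 hq1 ha0 ha1 k

lemma qp_le_one (hq0 : 0 < q) (hq1 : q < 1) (ha0 : 0 ≤ a) (ha1 : a < 1) (n : ℕ) :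
    qp a q n ≤ 1 :=
  Finset.prod_le_one (fun k _ => (factor_pos hq0 hq1 ha0 ha1 k).le)
    (fun k _ => factor_le_one hq0 ha0 k)

lemma qp_succ (a q : ℝ) (n : ℕ) : qp a q (n + 1) = qp a q n * (1 - a * q ^ n) :=
  Finset.prod_range_succ _ n

lemma qp_add (a q : ℝ) (m n : ℕ) : qp a q (m + n) = qp a q m * qp (a * q ^ m) q n := by
  rw [qp, Finset.prod_range_add]
  congr 1
  apply Finset.prod_congr rfl
  intro k _
  rw [pow_add, mul_assoc]

set_option maxHeartbeats 1000000 in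
lemma summable_log (hq0 : 0 < q) (hq1 : q < 1) (ha0 : 0 ≤ a) (ha1 : a < 1) :
    Summable fun k : ℕ => Real.log (1 - a * q ^ k) := by
  rw [← summable_neg_iff]
  refine Summable.of_nonneg_of_le (f := fun k => (1 - a)⁻¹ * q ^ k) ?_ ?_
    (((summable_geometric_of_lt_one hq0.le hq1)).mul_left _)
  · intro k
    simp only [neg_nonneg]
    exact Real.log_nonpos (factor_pos hq0 hq1 ha0 ha1 k).le (factor_le_one hq0 ha0 k)
  · intro k
    have hpos := factor_pos hq0 hq1 ha0 ha1 k
    have h1 : -Real.log (1 - a * q ^ k) = Real.log (1 - a * q ^ k)⁻¹ := by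
      rw [Real.log_inv]
    rw [h1]
    have h2 : Real.log (1 - a * q ^ k)⁻¹ ≤ (1 - a * q ^ k)⁻¹ - 1 :=
      Real.log_le_sub_one_of_pos (by positivity)
    have hk1 : q ^ k ≤ 1 := pow_le_one₀ hq0.le hq1.le
    have h3 : 1 - a ≤ 1 - a * q ^ k := by nlinarith
    have h4 : (1 - a * q ^ k)⁻¹ - 1 = (a * q ^ k) / (1 - a * q ^ k) := by
      field_simp
      ring
    have h5 : (a * q ^ k) / (1 - a * q ^ k) ≤ (1 - a)⁻¹ * q ^ k := by
      rw [div_le_iff₀ hpos]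
      have hk0 : 0 ≤ q ^ k := pow_nonneg hq0.le k
      have hia : (1 - a)⁻¹ * (1 - a) = 1 := inv_mul_cancel₀ (by linarith)
      have hi0 : 0 ≤ (1 - a)⁻¹ := inv_nonneg.2 (by linarith)
      have key : (1 - a)⁻¹ * q ^ k * (1 - a) ≤ (1 - a)⁻¹ * q ^ k * (1 - a * q ^ k) :=
        mul_le_mul_of_nonneg_left h3 (mul_nonneg hi0 hk0)
      have heq : (1 - a)⁻¹ * q ^ k * (1 - a) = q ^ k := by
        rw [mul_right_comm, hia, one_mul]
      have hle : a * q ^ k ≤ 1 * q ^ k := mul_le_mul_of_nonneg_right ha1.le hk0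
      linarith
    linarith

end aux

section aux2
variable {q a : ℝ}

lemma hasProd_qp (hq0 : 0 < q) (hq1 : q < 1) (ha0 : 0 ≤ a) (ha1 : a < 1) :
    HasProd (fun k : ℕ => 1 - a * q ^ k) (qpInf a q) := by
  have h := (Real.multipliable_of_summable_log (fun k => factor_pos hq0 hq1 ha0 ha1 k)
    (summable_log hq0 hq1 ha0 ha1)).hasProd
  exact h

lemma qpInf_pos (hq0 : 0 < q) (hq1 : q < 1) (ha0 : 0 ≤ a) (ha1 : a < 1) :
    0 < qpInf a q := by
  have h2 := Real.rexp_tsum_eq_tprod (fun k => factor_pos hq0 hq1 ha0 ha1 k)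
    (summable_log hq0 hq1 ha0 ha1)
  rw [qpInf, ← h2]
  exact Real.exp_pos _

lemma tendsto_qp (hq0 : 0 < q) (hq1 : q < 1) (ha0 : 0 ≤ a) (ha1 : a < 1) :
    Filter.Tendsto (fun n => qp a q n) Filter.atTop (nhds (qpInf a q)) :=
  (hasProd_qp hq0 hq1 ha0 ha1).tendsto_prod_nat

lemma aqn_lt_one (hq0 : 0 < q) (hq1 : q < 1) (ha0 : 0 ≤ a) (ha1 : a < 1) (n : ℕ) :
    a * q ^ n < 1 := by
  have h1 : q ^ n ≤ 1 := pow_le_one₀ hq0.le hq1.le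
  nlinarith

lemma qp_anti (hq0 : 0 < q) (hq1 : q < 1) (ha0 : 0 ≤ a) (ha1 : a < 1) {n m : ℕ}
    (h : n ≤ m) : qp a q m ≤ qp a q n := by
  obtain ⟨d, rfl⟩ := Nat.exists_eq_add_of_le h
  rw [qp_add]
  have h1 : 0 ≤ a * q ^ n := mul_nonneg ha0 (pow_nonneg hq0.le n)
  have h2 := aqn_lt_one hq0 hq1 ha0 ha1 n
  calc qp a q n * qp (a * q ^ n) q d ≤ qp a q n * 1 := by
        apply mul_le_mul_of_nonneg_left (qp_le_one hq0 hq1 h1 h2 d)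
          (qp_pos hq0 hq1 ha0 ha1 n).le
    _ = qp a q n := mul_one _

lemma qpInf_le_qp (hq0 : 0 < q) (hq1 : q < 1) (ha0 : 0 ≤ a) (ha1 : a < 1) (n : ℕ) :
    qpInf a q ≤ qp a q n := by
  apply le_of_tendsto (tendsto_qp hq0 hq1 ha0 ha1)
  filter_upwards [Filter.eventually_ge_atTop n] with m hm
  exact qp_anti hq0 hq1 ha0 ha1 hm

lemma qpInf_shift (hq0 : 0 < q) (hq1 : q < 1) (ha0 : 0 ≤ a) (ha1 : a < 1) (n : ℕ) :
    qpInf a q = qp a q n * qpInf (a * q ^ n) q := by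
  have h1 : Filter.Tendsto (fun m => qp a q (n + m)) Filter.atTop (nhds (qpInf a q)) :=
    (tendsto_qp hq0 hq1 ha0 ha1).comp (Filter.tendsto_add_atTop_nat n |>.comp
      (Filter.tendsto_id)) |>.congr (fun m => by simp [Nat.add_comm])
  have h2 : Filter.Tendsto (fun m => qp a q n * qp (a * q ^ n) q m) Filter.atTop
      (nhds (qp a q n * qpInf (a * q ^ n) q)) :=
    (tendsto_qp hq0 hq1 (mul_nonneg ha0 (pow_nonneg hq0.le n))
      (aqn_lt_one hq0 hq1 ha0 ha1 n)).const_mul _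
  have h3 : (fun m => qp a q (n + m)) = fun m => qp a q n * qp (a * q ^ n) q m := by
    funext m; exact qp_add a q n m
  rw [h3] at h1
  exact tendsto_nhds_unique h1 h2

lemma qp_ge (hq0 : 0 < q) (hq1 : q < 1) (ha0 : 0 ≤ a) (ha1 : a < 1) (n : ℕ) :
    1 - a * (1 - q)⁻¹ ≤ qp a q n := by
  have key : ∀ m : ℕ, 1 - a * ∑ k ∈ Finset.range m, q ^ k ≤ qp a q m := by
    intro m
    induction m with
    | zero => simp [qp]
    | succ m ih =>
      rw [qp_succ, Finset.sum_range_succ]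
      have hqp := qp_pos hq0 hq1 ha0 ha1 m
      have hf := factor_pos hq0 hq1 ha0 ha1 m
      rcases le_or_gt (1 - a * ∑ k ∈ Finset.range m, q ^ k) 0 with h | h
      · have h0 : 0 ≤ a * q ^ m := mul_nonneg ha0 (pow_nonneg hq0.le m)
        nlinarith
      · have hS : (0:ℝ) ≤ ∑ k ∈ Finset.range m, q ^ k :=
          Finset.sum_nonneg fun k _ => pow_nonneg hq0.le k
        nlinarith [mul_nonneg (mul_nonneg ha0 hS) (mul_nonneg ha0 (pow_nonneg hq0.le m))]
  have hsum : ∑ k ∈ Finset.range n, q ^ k ≤ (1 - q)⁻¹ := by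
    have h := Summable.sum_le_tsum (Finset.range n) (fun k _ => pow_nonneg hq0.le k)
      (summable_geometric_of_lt_one hq0.le hq1)
    rwa [tsum_geometric_of_lt_one hq0.le hq1] at h
  calc 1 - a * (1 - q)⁻¹ ≤ 1 - a * ∑ k ∈ Finset.range n, q ^ k := by
        have := mul_le_mul_of_nonneg_left hsum ha0
        linarith
    _ ≤ qp a q n := key n

lemma qpInf_ge (hq0 : 0 < q) (hq1 : q < 1) (ha0 : 0 ≤ a) (ha1 : a < 1) :
    1 - a * (1 - q)⁻¹ ≤ qpInf a q :=
  ge_of_tendsto (tendsto_qp hq0 hq1 ha0 ha1)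
    (Filter.Eventually.of_forall fun n => qp_ge hq0 hq1 ha0 ha1 n)

lemma qpInf_le_one (hq0 : 0 < q) (hq1 : q < 1) (ha0 : 0 ≤ a) (ha1 : a < 1) :
    qpInf a q ≤ 1 := by
  have := qpInf_le_qp hq0 hq1 ha0 ha1 0
  simpa [qp] using this

end aux2

noncomputable def Sq (q a t : ℝ) : ℝ := ∑' m : ℕ, qp a q m / qp q q m * t ^ m

section aux3
variable {q a t : ℝ}

lemma f_nonneg (hq0 : 0 < q) (hq1 : q < 1) (ha0 : 0 ≤ a) (ha1 : a < 1) (m : ℕ) :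
    0 ≤ qp a q m / qp q q m :=
  div_nonneg (qp_pos hq0 hq1 ha0 ha1 m).le (qp_pos hq0 hq1 hq0.le hq1 m).le

lemma f_le (hq0 : 0 < q) (hq1 : q < 1) (ha0 : 0 ≤ a) (ha1 : a < 1) (m : ℕ) :
    qp a q m / qp q q m ≤ (qpInf q q)⁻¹ := by
  have hQ : 0 < qpInf q q := qpInf_pos hq0 hq1 hq0.le hq1
  have h1 : qpInf q q ≤ qp q q m := qpInf_le_qp hq0 hq1 hq0.le hq1 m
  have h2 : qp a q m ≤ 1 := qp_le_one hq0 hq1 ha0 ha1 m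
  have h3 : 0 < qp q q m := qp_pos hq0 hq1 hq0.le hq1 m
  rw [div_le_iff₀ h3]
  calc qp a q m ≤ 1 := h2
    _ = (qpInf q q)⁻¹ * qpInf q q := (inv_mul_cancel₀ hQ.ne').symm
    _ ≤ (qpInf q q)⁻¹ * qp q q m := by
        apply mul_le_mul_of_nonneg_left h1 (inv_nonneg.2 hQ.le)

lemma summable_fS (hq0 : 0 < q) (hq1 : q < 1) (ha0 : 0 ≤ a) (ha1 : a < 1)
    (ht0 : 0 ≤ t) (ht1 : t < 1) :
    Summable (fun m : ℕ => qp a q m / qp q q m * t ^ m) := by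
  refine Summable.of_nonneg_of_le (f := fun m => (qpInf q q)⁻¹ * t ^ m)
    (fun m => mul_nonneg (f_nonneg hq0 hq1 ha0 ha1 m) (pow_nonneg ht0 m))
    (fun m => mul_le_mul_of_nonneg_right (f_le hq0 hq1 ha0 ha1 m) (pow_nonneg ht0 m))
    ((summable_geometric_of_lt_one ht0 ht1).mul_left _)

lemma qt_mem (hq0 : 0 < q) (hq1 : q < 1) (ht0 : 0 ≤ t) (ht1 : t < 1) :
    0 ≤ q * t ∧ q * t < 1 := by
  constructor
  · exact mul_nonneg hq0.le ht0
  · nlinarith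

lemma Sq_funEq (hq0 : 0 < q) (hq1 : q < 1) (ha0 : 0 ≤ a) (ha1 : a < 1)
    (ht0 : 0 ≤ t) (ht1 : t < 1) :
    (1 - t) * Sq q a t = (1 - a * t) * Sq q a (q * t) := by
  obtain ⟨hqt0, hqt1⟩ := qt_mem hq0 hq1 ht0 ht1
  set f : ℕ → ℝ := fun m => qp a q m / qp q q m with hf
  have hA : Summable (fun m => f m * t ^ m) := summable_fS hq0 hq1 ha0 ha1 ht0 ht1
  have hB : Summable (fun m => f m * (q * t) ^ m) := summable_fS hq0 hq1 ha0 ha1 hqt0 hqt1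
  -- recurrence
  have hrec : ∀ m : ℕ, f (m + 1) * (1 - q ^ (m + 1)) = f m * (1 - a * q ^ m) := by
    intro m
    have h1 : qp a q (m + 1) = qp a q m * (1 - a * q ^ m) := qp_succ a q m
    have h2 : qp q q (m + 1) = qp q q m * (1 - q ^ (m + 1)) := by
      rw [qp_succ]; ring_nf
    have h3 : (0:ℝ) < qp q q m := qp_pos hq0 hq1 hq0.le hq1 m
    have h4 : (0:ℝ) < 1 - q ^ (m + 1) := by
      have : q ^ (m + 1) < 1 := pow_lt_one₀ hq0.le hq1 (Nat.succ_ne_zero m)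
      linarith
    simp only [hf, h1, h2]
    field_simp
  -- difference identity
  have hg : Summable (fun m => f m * (1 - q ^ m) * t ^ m) := by
    have : (fun m => f m * (1 - q ^ m) * t ^ m)
        = fun m => f m * t ^ m - f m * (q * t) ^ m := by
      funext m; rw [mul_pow]; ring
    rw [this]; exact hA.sub hB
  have e1 : Sq q a t - Sq q a (q * t) = ∑' m, f m * (1 - q ^ m) * t ^ m := by
    rw [Sq, Sq, ← Summable.tsum_sub hA hB]
    congr 1; funext m; rw [mul_pow]; ring
  have e2 : ∑' m, f m * (1 - q ^ m) * t ^ m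
      = ∑' m, f (m + 1) * (1 - q ^ (m + 1)) * t ^ (m + 1) := by
    rw [Summable.tsum_eq_zero_add hg]
    simp
  have e3 : ∑' m, f (m + 1) * (1 - q ^ (m + 1)) * t ^ (m + 1)
      = t * Sq q a t - a * t * Sq q a (q * t) := by
    have h5 : ∀ m : ℕ, f (m + 1) * (1 - q ^ (m + 1)) * t ^ (m + 1)
        = t * (f m * t ^ m) - a * t * (f m * (q * t) ^ m) := by
      intro m
      rw [hrec m, mul_pow]
      ring
    rw [tsum_congr h5, Summable.tsum_sub (hA.mul_left t) (hB.mul_left (a * t)),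
      tsum_mul_left, tsum_mul_left]
    rfl
  have h6 := e1.trans (e2.trans e3)
  linear_combination h6
end aux3

section aux4
variable {q a t : ℝ}

lemma qp_zero (a q : ℝ) : qp a q 0 = 1 := by simp [qp]

lemma Sq_eq_one_add (hq0 : 0 < q) (hq1 : q < 1) (ha0 : 0 ≤ a) (ha1 : a < 1)
    (ht0 : 0 ≤ t) (ht1 : t < 1) :
    Sq q a t = 1 + ∑' m : ℕ, qp a q (m + 1) / qp q q (m + 1) * t ^ (m + 1) := by
  rw [Sq, Summable.tsum_eq_zero_add (summable_fS hq0 hq1 ha0 ha1 ht0 ht1)]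
  simp [qp_zero]

lemma Sq_ge_one (hq0 : 0 < q) (hq1 : q < 1) (ha0 : 0 ≤ a) (ha1 : a < 1)
    (ht0 : 0 ≤ t) (ht1 : t < 1) : 1 ≤ Sq q a t := by
  rw [Sq_eq_one_add hq0 hq1 ha0 ha1 ht0 ht1]
  have : 0 ≤ ∑' m : ℕ, qp a q (m + 1) / qp q q (m + 1) * t ^ (m + 1) :=
    tsum_nonneg fun m => mul_nonneg (f_nonneg hq0 hq1 ha0 ha1 (m + 1))
      (pow_nonneg ht0 (m + 1))
  linarith

set_option maxHeartbeats 1600000 in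
lemma Sq_le (hq0 : 0 < q) (hq1 : q < 1) (ha0 : 0 ≤ a) (ha1 : a < 1)
    (ht0 : 0 ≤ t) (ht2 : t ≤ 1 / 2) :
    Sq q a t ≤ 1 + 2 * (qpInf q q)⁻¹ * t := by
  have ht1 : t < 1 := by linarith
  have hQ : 0 < qpInf q q := qpInf_pos hq0 hq1 hq0.le hq1
  rw [Sq_eq_one_add hq0 hq1 ha0 ha1 ht0 ht1]
  have hsum2 : Summable (fun m : ℕ => (qpInf q q)⁻¹ * t * (1 / 2 : ℝ) ^ m) :=
    (summable_geometric_of_lt_one (by norm_num) (by norm_num)).mul_left _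
  have hsum1 : Summable (fun m : ℕ => qp a q (m + 1) / qp q q (m + 1) * t ^ (m + 1)) :=
    (summable_nat_add_iff 1).2 (summable_fS hq0 hq1 ha0 ha1 ht0 ht1)
  have hle : ∀ m : ℕ, qp a q (m + 1) / qp q q (m + 1) * t ^ (m + 1)
      ≤ (qpInf q q)⁻¹ * t * (1 / 2 : ℝ) ^ m := by
    intro m
    have h1 := f_le hq0 hq1 ha0 ha1 (m + 1)
    have h2 : t ^ (m + 1) ≤ t * (1 / 2 : ℝ) ^ m := by
      rw [pow_succ']
      apply mul_le_mul_of_nonneg_left _ ht0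
      exact pow_le_pow_left₀ ht0 ht2 m
    calc qp a q (m + 1) / qp q q (m + 1) * t ^ (m + 1)
        ≤ (qpInf q q)⁻¹ * t ^ (m + 1) :=
          mul_le_mul_of_nonneg_right h1 (pow_nonneg ht0 _)
      _ ≤ (qpInf q q)⁻¹ * (t * (1 / 2 : ℝ) ^ m) :=
          mul_le_mul_of_nonneg_left h2 (inv_nonneg.2 hQ.le)
      _ = (qpInf q q)⁻¹ * t * (1 / 2 : ℝ) ^ m := by ring
  have := Summable.tsum_le_tsum hle hsum1 hsum2
  have htsum : ∑' m : ℕ, (qpInf q q)⁻¹ * t * (1 / 2 : ℝ) ^ m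
      = 2 * (qpInf q q)⁻¹ * t := by
    rw [tsum_mul_left, tsum_geometric_of_lt_one (by norm_num) (by norm_num)]
    norm_num
    ring
  rw [htsum] at this
  linarith

lemma un_mem (hq0 : 0 < q) (hq1 : q < 1) (ht0 : 0 ≤ t) (ht1 : t < 1) (n : ℕ) :
    0 ≤ q ^ n * t ∧ q ^ n * t < 1 := by
  have h1 : q ^ n ≤ 1 := pow_le_one₀ hq0.le hq1.le
  have h2 : 0 ≤ q ^ n := pow_nonneg hq0.le n
  constructor
  · exact mul_nonneg h2 ht0
  · nlinarith

lemma tendsto_un (hq0 : 0 < q) (hq1 : q < 1) (t : ℝ) :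
    Filter.Tendsto (fun n : ℕ => q ^ n * t) Filter.atTop (nhds 0) := by
  have := (tendsto_pow_atTop_nhds_zero_of_lt_one hq0.le hq1).mul_const t
  simpa using this

lemma tendsto_Sq (hq0 : 0 < q) (hq1 : q < 1) (ha0 : 0 ≤ a) (ha1 : a < 1)
    (ht0 : 0 ≤ t) (ht1 : t < 1) :
    Filter.Tendsto (fun n : ℕ => Sq q a (q ^ n * t)) Filter.atTop (nhds 1) := by
  have hu := tendsto_un hq0 hq1 t
  have hub : Filter.Tendsto (fun n : ℕ => 1 + 2 * (qpInf q q)⁻¹ * (q ^ n * t))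
      Filter.atTop (nhds 1) := by
    have := (hu.const_mul (2 * (qpInf q q)⁻¹)).const_add 1
    simpa using this
  apply tendsto_of_tendsto_of_tendsto_of_le_of_le' tendsto_const_nhds hub
  · filter_upwards with n
    exact Sq_ge_one hq0 hq1 ha0 ha1 (un_mem hq0 hq1 ht0 ht1 n).1
      (un_mem hq0 hq1 ht0 ht1 n).2
  · have hev : ∀ᶠ n : ℕ in Filter.atTop, q ^ n * t ≤ 1 / 2 := by
      have := hu.eventually_le_const (show (0:ℝ) < 1/2 by norm_num)
      filter_upwards [this] with n hn
      exact hn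
    filter_upwards [hev] with n hn
    exact Sq_le hq0 hq1 ha0 ha1 (un_mem hq0 hq1 ht0 ht1 n).1 hn

lemma tendsto_qpInf (hq0 : 0 < q) (hq1 : q < 1) (ht0 : 0 ≤ t) (ht1 : t < 1) :
    Filter.Tendsto (fun n : ℕ => qpInf (q ^ n * t) q) Filter.atTop (nhds 1) := by
  have hu := tendsto_un hq0 hq1 t
  have hlb : Filter.Tendsto (fun n : ℕ => 1 - (q ^ n * t) * (1 - q)⁻¹)
      Filter.atTop (nhds 1) := by
    have := ((hu.mul_const ((1 - q)⁻¹)).const_sub 1)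
    simpa using this
  apply tendsto_of_tendsto_of_tendsto_of_le_of_le hlb tendsto_const_nhds
  · intro n
    exact qpInf_ge hq0 hq1 (un_mem hq0 hq1 ht0 ht1 n).1 (un_mem hq0 hq1 ht0 ht1 n).2
  · intro n
    exact qpInf_le_one hq0 hq1 (un_mem hq0 hq1 ht0 ht1 n).1 (un_mem hq0 hq1 ht0 ht1 n).2

lemma cauchy_step (hq0 : 0 < q) (hq1 : q < 1) (ha0 : 0 ≤ a) (ha1 : a < 1)
    {s : ℝ} (hs0 : 0 ≤ s) (hs1 : s < 1) :
    qpInf s q * Sq q a s = (1 - a * s) * (qpInf (q * s) q * Sq q a (q * s)) := by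
  have h1 : qpInf s q = (1 - s) * qpInf (s * q) q := by
    have := qpInf_shift hq0 hq1 hs0 hs1 1
    simpa [qp, pow_one] using this
  have h2 := Sq_funEq hq0 hq1 ha0 ha1 hs0 hs1
  rw [h1, mul_comm s q]
  calc (1 - s) * qpInf (q * s) q * Sq q a s
      = qpInf (q * s) q * ((1 - s) * Sq q a s) := by ring
    _ = qpInf (q * s) q * ((1 - a * s) * Sq q a (q * s)) := by rw [h2]
    _ = (1 - a * s) * (qpInf (q * s) q * Sq q a (q * s)) := by ring

lemma cauchy_iter (hq0 : 0 < q) (hq1 : q < 1) (ha0 : 0 ≤ a) (ha1 : a < 1)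
    (ht0 : 0 ≤ t) (ht1 : t < 1) (n : ℕ) :
    qpInf t q * Sq q a t
      = qp (a * t) q n * (qpInf (q ^ n * t) q * Sq q a (q ^ n * t)) := by
  induction n with
  | zero => simp [qp_zero]
  | succ n ih =>
    rw [ih, qp_succ]
    obtain ⟨h0, h1⟩ := un_mem hq0 hq1 ht0 ht1 n
    have step := cauchy_step hq0 hq1 ha0 ha1 h0 h1
    rw [step]
    have e1 : q * (q ^ n * t) = q ^ (n + 1) * t := by ring
    have e2 : (1 - a * (q ^ n * t)) = (1 - a * t * q ^ n) := by ring
    rw [e1, e2]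
    ring

lemma cauchy_id (hq0 : 0 < q) (hq1 : q < 1) (ha0 : 0 ≤ a) (ha1 : a < 1)
    (ht0 : 0 ≤ t) (ht1 : t < 1) :
    qpInf t q * Sq q a t = qpInf (a * t) q := by
  have hat0 : 0 ≤ a * t := mul_nonneg ha0 ht0
  have hat1 : a * t < 1 := by nlinarith
  have hlim : Filter.Tendsto
      (fun n : ℕ => qp (a * t) q n * (qpInf (q ^ n * t) q * Sq q a (q ^ n * t)))
      Filter.atTop (nhds (qpInf (a * t) q * (1 * 1))) :=
    (tendsto_qp hq0 hq1 hat0 hat1).mul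
      ((tendsto_qpInf hq0 hq1 ht0 ht1).mul (tendsto_Sq hq0 hq1 ha0 ha1 ht0 ht1))
  have hconst : Filter.Tendsto
      (fun _ : ℕ => qpInf t q * Sq q a t) Filter.atTop (nhds (qpInf t q * Sq q a t)) :=
    tendsto_const_nhds
  have heq : (fun n : ℕ => qp (a * t) q n * (qpInf (q ^ n * t) q * Sq q a (q ^ n * t)))
      = fun _ : ℕ => qpInf t q * Sq q a t := by
    funext n; exact (cauchy_iter hq0 hq1 ha0 ha1 ht0 ht1 n).symm
  rw [heq] at hlim
  have := tendsto_nhds_unique hconst hlim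
  rw [this, mul_one, mul_one]

lemma cauchy_q (hq0 : 0 < q) (hq1 : q < 1) (ha0 : 0 ≤ a) (ha1 : a < 1) :
    Sq q a q = qpInf (a * q) q / qpInf q q := by
  have hQ : 0 < qpInf q q := qpInf_pos hq0 hq1 hq0.le hq1
  have h := cauchy_id hq0 hq1 ha0 ha1 hq0.le hq1
  rw [eq_div_iff hQ.ne']
  linear_combination h

end aux4

noncomputable def Bf (p q : ℝ) (n k : ℕ) : ℝ :=
  q ^ n * Real.sqrt q * qp p q n * q ^ (k ^ 2) * Real.sqrt q ^ k /
    (qp q q k * qp q q (n - k) * qp p q k)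

noncomputable def Gf (p q : ℝ) (z : ℂ) (n k : ℕ) : ℂ :=
  if k ≤ n then ((Bf p q n k : ℝ) : ℂ) * ((-1) ^ k * z ^ k) else 0

section aux5
variable {p q : ℝ}

lemma rpow_split (hq0 : 0 < q) (k : ℕ) :
    q ^ ((k : ℝ) ^ 2 + (k : ℝ) / 2) = q ^ (k ^ 2) * Real.sqrt q ^ k := by
  rw [Real.rpow_add hq0]
  congr 1
  · rw [show ((k : ℝ) ^ 2) = ((k ^ 2 : ℕ) : ℝ) by push_cast; ring, Real.rpow_natCast]
  · rw [show ((k : ℝ) / 2) = ((1 : ℝ) / 2) * (k : ℕ) by ring, Real.rpow_mul hq0.le,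
      Real.rpow_natCast, ← Real.sqrt_eq_rpow]

lemma rpow_half_mul (hq0 : 0 < q) (n : ℕ) :
    q ^ ((n : ℝ) / 2 + 1 / 4) * q ^ ((n : ℝ) / 2 + 1 / 4) = q ^ n * Real.sqrt q := by
  rw [← Real.rpow_add hq0]
  rw [show ((n : ℝ) / 2 + 1 / 4 + ((n : ℝ) / 2 + 1 / 4)) = (n : ℝ) + (1 : ℝ) / 2 by ring,
    Real.rpow_add hq0, Real.rpow_natCast, ← Real.sqrt_eq_rpow]

lemma P_zero (hp0 : 0 ≤ p) (hp1 : p < 1) (hq0 : 0 < q) (hq1 : q < 1) (n : ℕ) :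
    P p q n 0 = (-1) ^ n * ((q ^ ((n : ℝ) / 2 + 1 / 4) : ℝ) : ℂ) *
      ((Real.sqrt (qp p q n / qp q q n) : ℝ) : ℂ) := by
  rw [P]
  have hsum : ∑ k ∈ Finset.range (n + 1),
      (-1) ^ k * ((qbinom q n k : ℝ) : ℂ) * ((q ^ ((k : ℝ) ^ 2 + (k : ℝ) / 2) : ℝ) : ℂ) /
        ((qp p q k : ℝ) : ℂ) * (0 : ℂ) ^ k = 1 := by
    rw [Finset.sum_eq_single 0]
    · have h1 : qbinom q n 0 = 1 := by
        rw [qbinom, qp_zero]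
        simp only [Nat.sub_zero, one_mul]
        exact div_self (qp_pos hq0 hq1 hq0.le hq1 n).ne'
      simp [h1, qp_zero]
    · intro k _ hk
      rw [zero_pow hk, mul_zero]
    · intro h
      exact absurd (Finset.mem_range.2 (Nat.succ_pos n)) h
  rw [hsum, mul_one]

lemma P_mul_P (hp0 : 0 ≤ p) (hp1 : p < 1) (hq0 : 0 < q) (hq1 : q < 1) (n : ℕ) (z : ℂ) :
    P p q n 0 * P p q n z = ∑ k ∈ Finset.range (n + 1), Gf p q z n k := by
  rw [P_zero hp0 hp1 hq0 hq1, P]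
  rw [Finset.mul_sum, Finset.mul_sum]
  apply Finset.sum_congr rfl
  intro k hk
  have hkn : k ≤ n := Nat.lt_succ_iff.1 (Finset.mem_range.1 hk)
  rw [Gf, if_pos hkn]
  -- real-level identity
  have hqqn := qp_pos hq0 hq1 hq0.le hq1 n
  have hqqk := qp_pos hq0 hq1 hq0.le hq1 k
  have hqqnk := qp_pos hq0 hq1 hq0.le hq1 (n - k)
  have hppk := qp_pos hq0 hq1 hp0 hp1 k
  have hsq : Real.sqrt (qp p q n / qp q q n) * Real.sqrt (qp p q n / qp q q n)
      = qp p q n / qp q q n :=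
    Real.mul_self_sqrt (div_nonneg (qp_pos hq0 hq1 hp0 hp1 n).le hqqn.le)
  have key : (q ^ ((n : ℝ) / 2 + 1 / 4) * q ^ ((n : ℝ) / 2 + 1 / 4))
      * (Real.sqrt (qp p q n / qp q q n) * Real.sqrt (qp p q n / qp q q n))
      * (qbinom q n k * q ^ ((k : ℝ) ^ 2 + (k : ℝ) / 2) / qp p q k) = Bf p q n k := by
    rw [rpow_half_mul hq0, hsq, rpow_split hq0, qbinom, Bf]
    field_simp
  have step1 : ((-1 : ℂ)) ^ n * ((q ^ ((n : ℝ) / 2 + 1 / 4) : ℝ) : ℂ) *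
        ((Real.sqrt (qp p q n / qp q q n) : ℝ) : ℂ) *
        ((-1) ^ n * ((q ^ ((n : ℝ) / 2 + 1 / 4) : ℝ) : ℂ) *
          ((Real.sqrt (qp p q n / qp q q n) : ℝ) : ℂ) *
          ((-1) ^ k * ((qbinom q n k : ℝ) : ℂ) * ((q ^ ((k : ℝ) ^ 2 + (k : ℝ) / 2) : ℝ) : ℂ) /
            ((qp p q k : ℝ) : ℂ) * z ^ k))
      = (((q ^ ((n : ℝ) / 2 + 1 / 4) * q ^ ((n : ℝ) / 2 + 1 / 4))
          * (Real.sqrt (qp p q n / qp q q n) * Real.sqrt (qp p q n / qp q q n))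
          * (qbinom q n k * q ^ ((k : ℝ) ^ 2 + (k : ℝ) / 2) / qp p q k) : ℝ) : ℂ)
          * ((-1) ^ k * z ^ k) * (((-1) ^ n : ℂ) * ((-1) ^ n : ℂ)) := by
    push_cast
    ring
  rw [step1, key]
  have h11 : ((-1 : ℂ) ^ n) * ((-1 : ℂ) ^ n) = 1 := by
    rw [← pow_add, Even.neg_one_pow ⟨n, rfl⟩]
  rw [h11, mul_one]
end aux5

section aux6
variable {p q : ℝ}

lemma Bf_nonneg (hp0 : 0 ≤ p) (hp1 : p < 1) (hq0 : 0 < q) (hq1 : q < 1) (n k : ℕ) :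
    0 ≤ Bf p q n k := by
  have h1 := qp_pos hq0 hq1 hq0.le hq1 k
  have h2 := qp_pos hq0 hq1 hq0.le hq1 (n - k)
  have h3 := qp_pos hq0 hq1 hp0 hp1 k
  have h4 := (qp_pos hq0 hq1 hp0 hp1 n).le
  have h5 : (0:ℝ) ≤ Real.sqrt q := Real.sqrt_nonneg q
  rw [Bf]
  apply div_nonneg
  · exact mul_nonneg (mul_nonneg (mul_nonneg (mul_nonneg (pow_nonneg hq0.le n) h5) h4)
      (pow_nonneg hq0.le _)) (pow_nonneg h5 k)
  · exact (mul_pos (mul_pos h1 h2) h3).le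

lemma Bf_le (hp0 : 0 ≤ p) (hp1 : p < 1) (hq0 : 0 < q) (hq1 : q < 1) (n k : ℕ) :
    Bf p q n k ≤ (qpInf q q * qpInf q q * qpInf p q)⁻¹ * (q ^ n * q ^ (k ^ 2)) := by
  have hQ : 0 < qpInf q q := qpInf_pos hq0 hq1 hq0.le hq1
  have hP : 0 < qpInf p q := qpInf_pos hq0 hq1 hp0 hp1
  have hden : qpInf q q * qpInf q q * qpInf p q ≤ qp q q k * qp q q (n - k) * qp p q k := by
    have a1 := qpInf_le_qp hq0 hq1 hq0.le hq1 k
    have a2 := qpInf_le_qp hq0 hq1 hq0.le hq1 (n - k)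
    have a3 := qpInf_le_qp hq0 hq1 hp0 hp1 k
    have b1 := qp_pos hq0 hq1 hq0.le hq1 (n - k)
    have b2 := qp_pos hq0 hq1 hp0 hp1 k
    exact mul_le_mul (mul_le_mul a1 a2 hQ.le (by linarith)) a3 hP.le
      (mul_pos (qp_pos hq0 hq1 hq0.le hq1 k) b1).le
  have hnum : q ^ n * Real.sqrt q * qp p q n * q ^ (k ^ 2) * Real.sqrt q ^ k
      ≤ q ^ n * q ^ (k ^ 2) := by
    have s1 : Real.sqrt q ≤ 1 := by
      rw [show (1:ℝ) = Real.sqrt 1 by simp]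
      exact Real.sqrt_le_sqrt hq1.le
    have s0 : 0 ≤ Real.sqrt q := Real.sqrt_nonneg q
    have s2 : Real.sqrt q ^ k ≤ 1 := pow_le_one₀ s0 s1
    have s3 : qp p q n ≤ 1 := qp_le_one hq0 hq1 hp0 hp1 n
    have s4 : 0 ≤ qp p q n := (qp_pos hq0 hq1 hp0 hp1 n).le
    have e1 : 0 ≤ q ^ n := pow_nonneg hq0.le n
    have e2 : 0 ≤ q ^ (k ^ 2) := pow_nonneg hq0.le (k ^ 2)
    calc q ^ n * Real.sqrt q * qp p q n * q ^ (k ^ 2) * Real.sqrt q ^ k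
        ≤ q ^ n * 1 * 1 * q ^ (k ^ 2) * 1 := by
          apply mul_le_mul
          apply mul_le_mul
          apply mul_le_mul
          apply mul_le_mul le_rfl s1 s0 e1
          all_goals first
          | exact s3 | exact s2 | exact s4 | exact e2 | exact le_rfl
          | positivity
      _ = q ^ n * q ^ (k ^ 2) := by ring
  have hd1 : (0:ℝ) < qp q q k * qp q q (n - k) * qp p q k :=
    mul_pos (mul_pos (qp_pos hq0 hq1 hq0.le hq1 k) (qp_pos hq0 hq1 hq0.le hq1 (n - k)))
      (qp_pos hq0 hq1 hp0 hp1 k)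
  have hd2 : (0:ℝ) < qpInf q q * qpInf q q * qpInf p q := mul_pos (mul_pos hQ hQ) hP
  rw [Bf, inv_mul_eq_div, div_le_div_iff₀ hd1 hd2]
  calc (q ^ n * Real.sqrt q * qp p q n * q ^ (k ^ 2) * Real.sqrt q ^ k)
        * (qpInf q q * qpInf q q * qpInf p q)
      ≤ (q ^ n * q ^ (k ^ 2)) * (qp q q k * qp q q (n - k) * qp p q k) := by
        apply mul_le_mul hnum hden (by positivity) (by positivity)

lemma norm_Gf_le (hp0 : 0 ≤ p) (hp1 : p < 1) (hq0 : 0 < q) (hq1 : q < 1) (z : ℂ) (n k : ℕ) :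
    ‖Gf p q z n k‖ ≤ (qpInf q q * qpInf q q * qpInf p q)⁻¹
      * (q ^ n * (q ^ (k ^ 2) * ‖z‖ ^ k)) := by
  have hQ : 0 < qpInf q q := qpInf_pos hq0 hq1 hq0.le hq1
  have hP : 0 < qpInf p q := qpInf_pos hq0 hq1 hp0 hp1
  rw [Gf]
  by_cases h : k ≤ n
  · rw [if_pos h]
    rw [norm_mul, norm_mul, norm_pow, norm_pow, norm_neg, norm_one, one_pow, one_mul,
      Complex.norm_real, Real.norm_eq_abs, abs_of_nonneg (Bf_nonneg hp0 hp1 hq0 hq1 n k)]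
    have h1 := Bf_le hp0 hp1 hq0 hq1 n k
    have h2 : (0:ℝ) ≤ ‖z‖ ^ k := pow_nonneg (norm_nonneg z) k
    calc Bf p q n k * ‖z‖ ^ k
        ≤ ((qpInf q q * qpInf q q * qpInf p q)⁻¹ * (q ^ n * q ^ (k ^ 2))) * ‖z‖ ^ k :=
          mul_le_mul_of_nonneg_right h1 h2
      _ = (qpInf q q * qpInf q q * qpInf p q)⁻¹ * (q ^ n * (q ^ (k ^ 2) * ‖z‖ ^ k)) := by
          ring
  · rw [if_neg h, norm_zero]
    positivity

lemma summable_qsq (hq0 : 0 < q) (hq1 : q < 1) {r : ℝ} (hr : 0 ≤ r) :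
    Summable (fun k : ℕ => q ^ (k ^ 2) * r ^ k) := by
  apply summable_of_ratio_norm_eventually_le (r := 1 / 2) (by norm_num)
  have htend : Filter.Tendsto (fun k : ℕ => q * r * (q ^ 2) ^ k) Filter.atTop (nhds 0) := by
    have := (tendsto_pow_atTop_nhds_zero_of_lt_one (by positivity : (0:ℝ) ≤ q ^ 2)
      (by nlinarith : q ^ 2 < 1)).const_mul (q * r)
    simpa using this
  have hev : ∀ᶠ k : ℕ in Filter.atTop, q * r * (q ^ 2) ^ k ≤ 1 / 2 :=
    htend.eventually_le_const (by norm_num)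
  filter_upwards [hev] with k hk
  have key : q ^ ((k + 1) ^ 2) * r ^ (k + 1) = (q * r * (q ^ 2) ^ k) * (q ^ (k ^ 2) * r ^ k) := by
    rw [show (k + 1) ^ 2 = k ^ 2 + (2 * k + 1) by ring, pow_add, pow_succ]
    rw [show (q ^ 2) ^ k = q ^ (2 * k) by rw [← pow_mul]]
    rw [show q ^ (2 * k + 1) = q ^ (2 * k) * q by rw [pow_succ]]
    ring
  have hnn : (0:ℝ) ≤ q ^ (k ^ 2) * r ^ k := by positivity
  rw [Real.norm_eq_abs, Real.norm_eq_abs, abs_of_nonneg (by positivity),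
    abs_of_nonneg hnn, key]
  exact mul_le_mul_of_nonneg_right hk hnn

set_option maxHeartbeats 1000000 in
lemma summable_Gf_norm (hp0 : 0 ≤ p) (hp1 : p < 1) (hq0 : 0 < q) (hq1 : q < 1) (z : ℂ) :
    Summable (fun pr : ℕ × ℕ => ‖Gf p q z pr.1 pr.2‖) := by
  refine Summable.of_nonneg_of_le (f := fun pr : ℕ × ℕ =>
      (qpInf q q * qpInf q q * qpInf p q)⁻¹ * (q ^ pr.1 * (q ^ (pr.2 ^ 2) * ‖z‖ ^ pr.2)))
    (fun pr => norm_nonneg _)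
    (fun pr => norm_Gf_le hp0 hp1 hq0 hq1 z pr.1 pr.2) ?_
  exact Summable.mul_left _ ((summable_geometric_of_lt_one hq0.le hq1).mul_of_nonneg
    (summable_qsq hq0 hq1 (norm_nonneg z))
    (fun n => pow_nonneg hq0.le n) (fun k => by positivity))

end aux6

section aux7
variable {p q : ℝ}

lemma col_sum (hp0 : 0 ≤ p) (hp1 : p < 1) (hq0 : 0 < q) (hq1 : q < 1) (z : ℂ) (k : ℕ) :
    ∑' n : ℕ, Gf p q z n k
      = ((Real.sqrt q : ℝ) : ℂ) * ((qpInf (p * q) q / qpInf q q : ℝ) : ℂ) *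
        ((-1) ^ k * ((q : ℂ) ^ (k * (k + 1)) /
          (((qp (p * q) q k : ℝ) : ℂ) * ((qp q q k : ℝ) : ℂ))) *
          (z * ((Real.sqrt q : ℝ) : ℂ)) ^ k) := by
  have hpq0 : 0 ≤ p * q := mul_nonneg hp0 hq0.le
  have hpq1 : p * q < 1 := by nlinarith
  have hpk0 : 0 ≤ p * q ^ k := mul_nonneg hp0 (pow_nonneg hq0.le k)
  have hpk1 : p * q ^ k < 1 := aqn_lt_one hq0 hq1 hp0 hp1 k
  have hQ : 0 < qpInf q q := qpInf_pos hq0 hq1 hq0.le hq1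
  have hqpqk : 0 < qp (p * q) q k := qp_pos hq0 hq1 hpq0 hpq1 k
  have hqqk : 0 < qp q q k := qp_pos hq0 hq1 hq0.le hq1 k
  have hppk : 0 < qp p q k := qp_pos hq0 hq1 hp0 hp1 k
  -- summability of the column
  have hpair : Summable (fun pr : ℕ × ℕ => Gf p q z pr.1 pr.2) :=
    Summable.of_norm (summable_Gf_norm hp0 hp1 hq0 hq1 z)
  have hcol : Summable (fun n : ℕ => Gf p q z n k) := by
    have := (hpair.prod_symm).prod_factor k
    simpa using this
  -- split off first k terms (all zero)
  have h1 : ∑' n : ℕ, Gf p q z n k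
      = ∑ i ∈ Finset.range k, Gf p q z i k + ∑' m : ℕ, Gf p q z (m + k) k :=
    (Summable.sum_add_tsum_nat_add k hcol).symm
  have h2 : ∑ i ∈ Finset.range k, Gf p q z i k = 0 := by
    apply Finset.sum_eq_zero
    intro i hi
    rw [Gf, if_neg (not_le.2 (Finset.mem_range.1 hi))]
  -- explicit form of shifted terms
  set Ek : ℝ := q ^ k * Real.sqrt q * q ^ (k ^ 2) * Real.sqrt q ^ k / qp q q k with hEk
  have h3 : ∀ m : ℕ, Gf p q z (m + k) k
      = ((Ek * (qp (p * q ^ k) q m / qp q q m * q ^ m) : ℝ) : ℂ) * ((-1) ^ k * z ^ k) := by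
    intro m
    rw [Gf, if_pos (Nat.le_add_left k m)]
    congr 1
    rw [Complex.ofReal_inj]
    rw [Bf, Nat.add_sub_cancel, Nat.add_comm m k, qp_add p q k m]
    have hqqm : 0 < qp q q m := qp_pos hq0 hq1 hq0.le hq1 m
    rw [hEk]
    field_simp
    ring
  -- sum the column
  have hxsum : Summable (fun m : ℕ => qp (p * q ^ k) q m / qp q q m * q ^ m) :=
    summable_fS hq0 hq1 hpk0 hpk1 hq0.le hq1
  have h4 : ∑' m : ℕ, Gf p q z (m + k) k
      = ((-1) ^ k * z ^ k) * ((Ek : ℝ) : ℂ) * ((Sq q (p * q ^ k) q : ℝ) : ℂ) := by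
    rw [tsum_congr h3, tsum_mul_right]
    rw [← Complex.ofReal_tsum]
    rw [tsum_mul_left]
    rw [Sq]
    push_cast
    ring
  -- Cauchy identity
  have h5 : Sq q (p * q ^ k) q = qpInf (p * q) q / qp (p * q) q k / qpInf q q := by
    rw [cauchy_q hq0 hq1 hpk0 hpk1]
    congr 1
    have hshift := qpInf_shift hq0 hq1 hpq0 hpq1 k
    rw [show p * q ^ k * q = p * q * q ^ k by ring]
    rw [eq_div_iff hqpqk.ne']
    linarith [hshift]
  rw [h1, h2, zero_add, h4, h5]
  -- final algebraic identity
  rw [hEk]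
  have hk2 : k * (k + 1) = k ^ 2 + k := by ring
  rw [hk2]
  push_cast
  rw [pow_add]
  have c1 : ((qp q q k : ℝ) : ℂ) ≠ 0 := Complex.ofReal_ne_zero.2 hqqk.ne'
  have c2 : ((qp (p * q) q k : ℝ) : ℂ) ≠ 0 := Complex.ofReal_ne_zero.2 hqpqk.ne'
  have c3 : ((qpInf q q : ℝ) : ℂ) ≠ 0 := Complex.ofReal_ne_zero.2 hQ.ne'
  rw [mul_pow z]
  field_simp

end aux7

theorem stmt_3 (p q : ℝ) (hp0 : 0 ≤ p) (hp1 : p < 1) (hq0 : 0 < q) (hq1 : q < 1) (z : ℂ) :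
    Summable (fun n : ℕ => ‖P p q n 0 * P p q n z‖) ∧
    z * (∑' n : ℕ, P p q n 0 * P p q n z)
      = z * ((Real.sqrt q : ℝ) : ℂ) * ((qpInf (p * q) q / qpInf q q : ℝ) : ℂ) *
        ∑' n : ℕ, (-1) ^ n * ((q : ℂ) ^ (n * (n + 1)) /
          (((qp (p * q) q n : ℝ) : ℂ) * ((qp q q n : ℝ) : ℂ))) *
          (z * ((Real.sqrt q : ℝ) : ℂ)) ^ n := by
  have hnorm := summable_Gf_norm hp0 hp1 hq0 hq1 z
  have hpair : Summable (Function.uncurry (Gf p q z)) := Summable.of_norm hnorm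
  have hrowsum : ∀ n, Summable (fun k => ‖Gf p q z n k‖) := fun n => hnorm.prod_factor n
  have hrows : ∀ n, P p q n 0 * P p q n z = ∑' k, Gf p q z n k := by
    intro n
    rw [P_mul_P hp0 hp1 hq0 hq1 n z]
    symm
    apply tsum_eq_sum
    intro b hb
    rw [Gf, if_neg]
    intro hle
    exact hb (Finset.mem_range.2 (Nat.lt_succ_of_le hle))
  constructor
  · refine Summable.of_nonneg_of_le (f := fun n => ∑' k, ‖Gf p q z n k‖)
      (fun n => norm_nonneg _) ?_ ?_
    · intro n
      rw [hrows n]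
      exact norm_tsum_le_tsum_norm (hrowsum n)
    · exact ((summable_prod_of_nonneg (fun _ => norm_nonneg _)).1 hnorm).2
  · have hcols : ∀ k, Summable (fun n => Gf p q z n k) := by
      intro k
      have := (hpair.prod_symm).prod_factor k
      simpa using this
    have hrows' : ∀ n, Summable (fun k => Gf p q z n k) := fun n => hpair.prod_factor n
    have hswap : ∑' (n : ℕ) (k : ℕ), Gf p q z n k = ∑' (k : ℕ) (n : ℕ), Gf p q z n k :=
      (Summable.tsum_comm' hpair hrows' hcols).symm
    rw [tsum_congr hrows, hswap, tsum_congr (fun k => col_sum hp0 hp1 hq0 hq1 z k),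
      tsum_mul_left]
    ring
end

section
/- Define β_n = q·(1−q^n)·(1−pq^n)/((1+q−(1+p)·q^n)·(1+q−(1+p)·q^{n+1})) for n ≥ 1 and M_n = q·Δ_n/((1+q−(1+p)·q^{n+1})·Δ_{n+1}) for n ≥ 0. Then 0 < M_n < 1 for all n ≥ 0, and β_n = M_n·(1 − M_{n−1}) for all n ≥ 1. -/
/-- `Δ_n = (pq^n;q)_∞ − (q^n;q)_∞`. -/
noncomputable def Δ (p q : ℝ) (n : ℕ) : ℝ := qpInf (p * q ^ n) q - qpInf (q ^ n) q

/-- The chain sequence `β_n`. -/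
noncomputable def β (p q : ℝ) (n : ℕ) : ℝ :=
  q * (1 - q ^ n) * (1 - p * q ^ n) /
    ((1 + q - (1 + p) * q ^ n) * (1 + q - (1 + p) * q ^ (n + 1)))

/-- The maximal parameter sequence `M_n`. -/
noncomputable def Mseq (p q : ℝ) (n : ℕ) : ℝ :=
  q * Δ p q n / ((1 + q - (1 + p) * q ^ (n + 1)) * Δ p q (n + 1))

open Real Filter

theorem qp_hasProd {z q : ℝ} (hz0 : 0 ≤ z) (hz1 : z < 1) (hq0 : 0 < q) (hq1 : q < 1) :
    HasProd (fun k : ℕ => 1 - z * q ^ k) (Real.exp (∑' k : ℕ, Real.log (1 - z * q ^ k))) := by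
  have hpos : ∀ k : ℕ, 0 < 1 - z * q ^ k := by
    intro k
    have h1 : q ^ k ≤ 1 := pow_le_one₀ hq0.le hq1.le
    nlinarith [pow_pos hq0 k]
  have hsum : Summable (fun k : ℕ => Real.log (1 - z * q ^ k)) := by
    have h : Summable (fun k : ℕ => -Real.log (1 - z * q ^ k)) := by
      apply Summable.of_nonneg_of_le (f := fun k => (z/(1-z)) * q ^ k)
      · intro k
        simp only [neg_nonneg]
        apply Real.log_nonpos
        · exact (hpos k).le
        · have h1 : 0 ≤ z * q ^ k := by positivity
          linarith
      · intro k
        have hx0 : 0 ≤ z * q ^ k := by positivity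
        have hx1 : z * q ^ k ≤ z := by
          nlinarith [pow_le_one₀ hq0.le hq1.le (n := k)]
        have hp := hpos k
        have := Real.log_le_sub_one_of_pos (x := (1 - z * q ^ k)⁻¹) (by positivity)
        rw [Real.log_inv] at this
        have hq' : 0 < 1 - z := by linarith
        have h2 : (1 - z * q ^ k)⁻¹ ≤ 1 + (z/(1-z)) * q ^ k := by
          rw [inv_le_iff_one_le_mul₀ hp]
          have hd : z / (1 - z) * q ^ k * (1 - z) = z * q ^ k := by
            field_simp
          have hu : 0 ≤ z / (1 - z) * q ^ k := by positivity
          nlinarith [hu, hd, hx1, hx0]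
        linarith
      · exact (summable_geometric_of_lt_one hq0.le hq1).mul_left _
    have := h.neg
    simpa using this
  have heq : (fun k : ℕ => 1 - z * q ^ k) = fun k => rexp (Real.log (1 - z * q ^ k)) :=
    funext fun k => (Real.exp_log (hpos k)).symm
  rw [heq]
  exact hsum.hasSum.rexp

theorem hasProd_zero_of_eq_zero {f : ℕ → ℝ} (i : ℕ) (h : f i = 0) : HasProd f 0 := by
  rw [HasProd]
  have hev : ∀ᶠ s in atTop, ∏ k ∈ s, f k = 0 :=
    eventually_atTop.2 ⟨{i}, fun s hs => Finset.prod_eq_zero (hs (Finset.mem_singleton_self i)) h⟩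
  exact Tendsto.congr' (hev.mono fun s hs => hs.symm) tendsto_const_nhds

theorem qpInf_pos_s14 {z q : ℝ} (hz0 : 0 ≤ z) (hz1 : z < 1) (hq0 : 0 < q) (hq1 : q < 1) :
    0 < qpInf z q := by
  rw [qpInf, (qp_hasProd hz0 hz1 hq0 hq1).tprod_eq]
  exact Real.exp_pos _

theorem qpInf_one {q : ℝ} : qpInf 1 q = 0 := by
  rw [qpInf]
  exact (hasProd_zero_of_eq_zero 0 (by norm_num)).tprod_eq

private theorem hasProd_le_real {f g : ℕ → ℝ} {a b : ℝ} (h0 : ∀ k, 0 ≤ f k)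
    (hle : ∀ k, f k ≤ g k) (hf : HasProd f a) (hg : HasProd g b) : a ≤ b :=
  le_of_tendsto_of_tendsto' hf hg fun s =>
    Finset.prod_le_prod (fun i _ => h0 i) (fun i _ => hle i)

theorem qpInf_le {z w q : ℝ} (hz0 : 0 ≤ z) (hzw : z ≤ w) (hw1 : w < 1)
    (hq0 : 0 < q) (hq1 : q < 1) : qpInf w q ≤ qpInf z q := by
  have h0 : ∀ k : ℕ, 0 ≤ 1 - w * q ^ k := by
    intro k
    have h1 : q ^ k ≤ 1 := pow_le_one₀ hq0.le hq1.le
    nlinarith [pow_pos hq0 k, hz0.trans hzw]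
  have hle : ∀ k : ℕ, 1 - w * q ^ k ≤ 1 - z * q ^ k := by
    intro k
    have h1 : 0 ≤ q ^ k := (pow_pos hq0 k).le
    nlinarith
  have hw := qp_hasProd (hz0.trans hzw) hw1 hq0 hq1
  have hz := qp_hasProd hz0 (lt_of_le_of_lt hzw hw1) hq0 hq1
  rw [qpInf, qpInf, hw.tprod_eq, hz.tprod_eq]
  exact hasProd_le_real h0 hle hw hz

theorem qp_rec {z q : ℝ} (hz0 : 0 ≤ z) (hz1 : z ≤ 1) (hq0 : 0 < q) (hq1 : q < 1) :
    qpInf z q = (1 - z) * qpInf (z * q) q := by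
  have htail : Multipliable (fun n : ℕ => 1 - z * q ^ (n + 1)) := by
    have hzq0 : 0 ≤ z * q := mul_nonneg hz0 hq0.le
    have hzq1 : z * q < 1 := by nlinarith
    have h := qp_hasProd hzq0 hzq1 hq0 hq1
    have heq : (fun n : ℕ => 1 - z * q ^ (n + 1)) = fun n : ℕ => 1 - (z * q) * q ^ n := by
      funext n; ring
    exact heq ▸ h.multipliable
  have key := tprod_eq_zero_mul' (f := fun k : ℕ => 1 - z * q ^ k) htail
  rw [qpInf, key]
  congr 1
  · norm_num
  · rw [qpInf]
    exact tprod_congr fun n => by ring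

theorem stmt_14 (p q : ℝ) (hp0 : 0 ≤ p) (hp1 : p < 1) (hq0 : 0 < q) (hq1 : q < 1) :
    (∀ n : ℕ, 0 < Mseq p q n ∧ Mseq p q n < 1) ∧
    (∀ n : ℕ, 1 ≤ n → β p q n = Mseq p q n * (1 - Mseq p q (n - 1))) := by
  have hqpow1 : ∀ n : ℕ, q ^ n ≤ 1 := fun n => pow_le_one₀ hq0.le hq1.le
  have hqpos : ∀ n : ℕ, 0 < q ^ n := fun n => pow_pos hq0 n
  -- recurrences
  have hArec : ∀ n : ℕ, qpInf (p * q ^ n) q = (1 - p * q ^ n) * qpInf (p * q ^ (n + 1)) q := by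
    intro n
    have := qp_rec (z := p * q ^ n) (q := q) (by positivity)
      (by nlinarith [hqpow1 n, hqpos n]) hq0 hq1
    rw [show p * q ^ n * q = p * q ^ (n + 1) by ring] at this
    exact this
  have hBrec : ∀ n : ℕ, qpInf (q ^ n) q = (1 - q ^ n) * qpInf (q ^ (n + 1)) q := by
    intro n
    have := qp_rec (z := q ^ n) (q := q) (hqpos n).le (hqpow1 n) hq0 hq1
    rw [show q ^ n * q = q ^ (n + 1) by ring] at this
    exact this
  have hq1n : ∀ n : ℕ, q ^ (n + 1) < 1 := by
    intro n
    calc q ^ (n + 1) = q ^ n * q := by ring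
    _ ≤ 1 * q := by nlinarith [hqpow1 n, hqpos n]
    _ < 1 := by linarith
  have hBpos : ∀ n : ℕ, 0 < qpInf (q ^ (n + 1)) q :=
    fun n => qpInf_pos_s14 (hqpos (n + 1)).le (hq1n n) hq0 hq1
  have hApos : ∀ n : ℕ, 0 < qpInf (p * q ^ n) q := by
    intro n
    exact qpInf_pos_s14 (by positivity) (by nlinarith [hqpow1 n, hqpos n]) hq0 hq1
  -- positivity of Δ
  have hΔpos : ∀ n : ℕ, 0 < Δ p q n := by
    intro n
    cases n with
    | zero =>
      rw [Δ, pow_zero, qpInf_one]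
      simpa using hApos 0
    | succ m =>
      rw [Δ, hArec (m + 1), hBrec (m + 1)]
      have hle : qpInf (q ^ (m + 2)) q ≤ qpInf (p * q ^ (m + 2)) q :=
        qpInf_le (by positivity) (by nlinarith [hqpos (m + 2)]) (hq1n (m + 1)) hq0 hq1
      have hB2 := hBpos (m + 1)
      have h1 : 1 - q ^ (m + 1) > 0 := by linarith [hq1n m]
      have h2 : 1 - p * q ^ (m + 1) > 1 - q ^ (m + 1) := by
        nlinarith [hqpos (m + 1)]
      nlinarith [hApos (m + 2)]
  -- positivity of denominators
  have hC : ∀ m : ℕ, 0 < 1 + q - (1 + p) * q ^ (m + 1) := by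
    intro m
    have h1 : q ^ (m + 1) ≤ q := by
      calc q ^ (m + 1) = q ^ m * q := by ring
      _ ≤ 1 * q := by nlinarith [hqpow1 m, hqpos m]
      _ = q := one_mul q
    nlinarith [hqpos (m + 1)]
  -- the key identity
  have star : ∀ n : ℕ,
      (1 + q - (1 + p) * q ^ (n + 1)) * Δ p q (n + 1) - q * Δ p q n
        = (1 - q ^ (n + 1)) * (1 - p * q ^ (n + 1)) * Δ p q (n + 2) := by
    intro n
    simp only [Δ]
    rw [hArec n, hArec (n + 1), hBrec n, hBrec (n + 1)]
    ring
  have hM : ∀ n : ℕ, 0 < Mseq p q n ∧ Mseq p q n < 1 := by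
    intro n
    constructor
    · exact div_pos (mul_pos hq0 (hΔpos n)) (mul_pos (hC n) (hΔpos (n + 1)))
    · rw [Mseq, div_lt_one (mul_pos (hC n) (hΔpos (n + 1)))]
      have hst := star n
      have hpos : 0 < (1 - q ^ (n + 1)) * (1 - p * q ^ (n + 1)) * Δ p q (n + 2) := by
        have h1 : 0 < 1 - q ^ (n + 1) := by linarith [hq1n n]
        have h2 : 0 < 1 - p * q ^ (n + 1) := by nlinarith [hqpos (n + 1)]
        exact mul_pos (mul_pos h1 h2) (hΔpos (n + 2))
      nlinarith
  refine ⟨hM, ?_⟩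
  intro n hn
  obtain ⟨m, rfl⟩ : ∃ m, n = m + 1 := ⟨n - 1, by omega⟩
  have hsub : m + 1 - 1 = m := rfl
  rw [hsub]
  have hC1 := (hC m).ne'
  have hΔ1 := (hΔpos (m + 1)).ne'
  have hne : (1 + q - (1 + p) * q ^ (m + 1)) * Δ p q (m + 1) ≠ 0 := mul_ne_zero hC1 hΔ1
  have h1m : 1 - Mseq p q m
      = (1 - q ^ (m + 1)) * (1 - p * q ^ (m + 1)) * Δ p q (m + 2) /
        ((1 + q - (1 + p) * q ^ (m + 1)) * Δ p q (m + 1)) := by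
    rw [Mseq, one_sub_div hne, star m]
  rw [h1m, Mseq, β, div_mul_div_comm,
    div_eq_div_iff (mul_pos (hC m) (hC (m + 1))).ne'
      (mul_pos (mul_pos (hC (m + 1)) (hΔpos (m + 2))) (mul_pos (hC m) (hΔpos (m + 1)))).ne']
  ring
end
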